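/- Let G_ω be an edge-weighted simple graph in which at most one edge has non-trivial weight (i.e., weight at least 2). Then the edge ideal I(G_ω) is integrally closed, i.e., I(G_ω) equals its integral closure. -/

import Mathlib

open MvPolynomial

/-- The edge ideal of an edge-weighted graph `G` with weight function `w`:
generated by `x_i^{w(e)} x_j^{w(e)}` for each edge `e = {i,j}` of `G`. -/
noncomputable def edgeIdeal (K : Type*) [Field K] {n : ℕ}
    (G : SimpleGraph (Fin n)) (w : Sym2 (Fin n) → ℕ) :
    Ideal (MvPolynomial (Fin n) K) :=
  Ideal.span {m | ∃ i j : Fin n, G.Adj i j ∧ m = X i ^ w s(i, j) * X j ^ w s(i, j)}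

/-- The integral closure of an ideal `I`: elements `f` satisfying an equation
`f^k + c_1 f^{k-1} + ⋯ + c_k = 0` with `c_i ∈ I^i`. -/
def intClosure {R : Type*} [CommRing R] (I : Ideal R) : Set R :=
  {f | ∃ k : ℕ, 0 < k ∧ ∃ c : ℕ → R,
    (∀ i ∈ Finset.Icc 1 k, c i ∈ I ^ i) ∧
    f ^ k + ∑ i ∈ Finset.Icc 1 k, c i * f ^ (k - i) = 0}

/-- An ideal is integrally closed if it equals its integral closure. -/
def IsIntClosed {R : Type*} [CommRing R] (I : Ideal R) : Prop :=
  intClosure I = ↑I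

namespace EWAux

/-! ### The ideal of polynomials whose low coefficients vanish -/

/-- The ideal of polynomials all of whose coefficients in degrees `< V` vanish. -/
def lowV {R : Type*} [CommRing R] (V : ℕ) : Ideal (Polynomial R) where
  carrier := {p | ∀ m, m < V → p.coeff m = 0}
  zero_mem' := fun m _ => Polynomial.coeff_zero m
  add_mem' := by
    intro p q hp hq m hm
    simp [Polynomial.coeff_add, hp m hm, hq m hm]
  smul_mem' := by
    intro q p hp m hm
    rw [smul_eq_mul, Polynomial.coeff_mul]
    refine Finset.sum_eq_zero ?_
    rintro ⟨i, j⟩ hij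
    rw [Finset.HasAntidiagonal.mem_antidiagonal] at hij
    rw [hp j (by omega), mul_zero]

theorem mem_lowV {R : Type*} [CommRing R] {V : ℕ} {p : Polynomial R} :
    p ∈ lowV V ↔ ∀ m, m < V → p.coeff m = 0 := Iff.rfl

theorem lowV_anti {R : Type*} [CommRing R] {V V' : ℕ} (h : V ≤ V') :
    lowV (R := R) V' ≤ lowV V := fun _ hp m hm => hp m (lt_of_lt_of_le hm h)

theorem mul_mem_lowV {R : Type*} [CommRing R] {u v : ℕ} {p q : Polynomial R}
    (hp : p ∈ lowV u) (hq : q ∈ lowV v) : p * q ∈ lowV (u + v) := by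
  intro m hm
  rw [Polynomial.coeff_mul]
  refine Finset.sum_eq_zero ?_
  rintro ⟨i, j⟩ hij
  rw [Finset.HasAntidiagonal.mem_antidiagonal] at hij
  rcases lt_or_ge i u with h | h
  · rw [hp i h, zero_mul]
  · rw [hq j (by omega), mul_zero]

theorem ntd_pow {R : Type*} [CommRing R] [IsDomain R] (p : Polynomial R) (hp : p ≠ 0) (k : ℕ) :
    (p ^ k).natTrailingDegree = k * p.natTrailingDegree := by
  induction k with
  | zero => simp
  | succ k ih =>
    rw [pow_succ, Polynomial.natTrailingDegree_mul (pow_ne_zero _ hp) hp, ih]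
    ring

/-! ### Weighted degree and the substitution homomorphism -/

/-- The `lam`-weighted degree of an exponent vector. -/
def wdeg {n : ℕ} (lam : Fin n → ℕ) (a : Fin n →₀ ℕ) : ℕ := ∑ i, lam i * a i

theorem wdeg_apply {n : ℕ} (lam : Fin n → ℕ) (a : Fin n →₀ ℕ) :
    wdeg lam a = ∑ i, lam i * a i := rfl

/-- The substitution `X i ↦ X i * t ^ lam i`. -/
noncomputable def psiHom (K : Type*) [Field K] {n : ℕ} (lam : Fin n → ℕ) :
    MvPolynomial (Fin n) K →+* Polynomial (MvPolynomial (Fin n) K) :=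
  MvPolynomial.eval₂Hom (Polynomial.C.comp MvPolynomial.C)
    (fun i => Polynomial.C (MvPolynomial.X i) * Polynomial.X ^ lam i)

theorem psiHom_monomial (K : Type*) [Field K] {n : ℕ} (lam : Fin n → ℕ)
    (a : Fin n →₀ ℕ) (c : K) :
    psiHom K lam (monomial a c) =
      Polynomial.C (monomial a c) * Polynomial.X ^ wdeg lam a := by
  have h0 : psiHom K lam (monomial a c)
      = (Polynomial.C.comp MvPolynomial.C) c *
        a.prod fun i e => (Polynomial.C (MvPolynomial.X i) * Polynomial.X ^ lam i) ^ e := by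
    exact MvPolynomial.eval₂_monomial _ _
  rw [h0]
  rw [Finsupp.prod_fintype _ _ (fun i => pow_zero _)]
  have h1 : ∀ i : Fin n, (Polynomial.C (MvPolynomial.X i) * Polynomial.X ^ lam i) ^ a i
      = Polynomial.C ((MvPolynomial.X i : MvPolynomial (Fin n) K) ^ a i)
        * Polynomial.X ^ (lam i * a i) := by
    intro i
    rw [mul_pow, ← map_pow, ← pow_mul]
  rw [Finset.prod_congr rfl (fun i _ => h1 i), Finset.prod_mul_distrib, ← map_prod,
    Finset.prod_pow_eq_pow_sum]
  have h2 : (monomial a c : MvPolynomial (Fin n) K)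
      = MvPolynomial.C c * ∏ i, MvPolynomial.X i ^ a i := by
    rw [monomial_eq]
    congr 1
    exact Finsupp.prod_fintype _ _ (fun i => pow_zero _)
  rw [wdeg_apply, h2]
  simp [mul_assoc, mul_comm, mul_left_comm]

theorem psiHom_retract (K : Type*) [Field K] {n : ℕ} (lam : Fin n → ℕ)
    (f : MvPolynomial (Fin n) K) :
    Polynomial.eval 1 (psiHom K lam f) = f := by
  have h : (Polynomial.evalRingHom (1 : MvPolynomial (Fin n) K)).comp (psiHom K lam)
      = RingHom.id _ := by
    apply MvPolynomial.ringHom_ext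
    · intro c
      simp [psiHom]
    · intro i
      simp [psiHom]
  have := RingHom.congr_fun h f
  simpa using this

theorem psiHom_ne_zero (K : Type*) [Field K] {n : ℕ} (lam : Fin n → ℕ)
    {f : MvPolynomial (Fin n) K} (hf : f ≠ 0) : psiHom K lam f ≠ 0 := by
  intro h
  apply hf
  rw [← psiHom_retract K lam f, h, Polynomial.eval_zero]

theorem psiHom_coeff (K : Type*) [Field K] {n : ℕ} (lam : Fin n → ℕ)
    (f : MvPolynomial (Fin n) K) (a : Fin n →₀ ℕ) :
    MvPolynomial.coeff a ((psiHom K lam f).coeff (wdeg lam a)) = MvPolynomial.coeff a f := by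
  have hrep : ∀ b : Fin n →₀ ℕ,
      (psiHom K lam (monomial b (MvPolynomial.coeff b f))).coeff (wdeg lam a)
        = if wdeg lam b = wdeg lam a then monomial b (MvPolynomial.coeff b f) else 0 := by
    intro b
    rw [psiHom_monomial, Polynomial.coeff_C_mul, Polynomial.coeff_X_pow]
    rcases eq_or_ne (wdeg lam b) (wdeg lam a) with h | h
    · rw [if_pos h, if_pos h.symm, mul_one]
    · rw [if_neg h, if_neg (Ne.symm h), mul_zero]
  conv_lhs => rw [f.as_sum, map_sum, Polynomial.finset_sum_coeff]
  rw [MvPolynomial.coeff_sum]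
  by_cases ha : a ∈ f.support
  · rw [Finset.sum_eq_single a]
    · rw [hrep a, if_pos rfl]
      simp [MvPolynomial.coeff_monomial]
    · intro b _ hba
      rw [hrep b]
      split_ifs with h
      · simp [MvPolynomial.coeff_monomial, hba]
      · simp
    · intro h
      exact absurd ha h
  · have h0 : MvPolynomial.coeff a f = 0 := by
      rwa [← MvPolynomial.notMem_support_iff]
    rw [h0]
    refine Finset.sum_eq_zero ?_
    intro b hb
    have hba : b ≠ a := fun h => ha (h ▸ hb)
    rw [hrep b]
    split_ifs with h
    · simp [MvPolynomial.coeff_monomial, hba]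
    · simp

/-! ### The key valuative lemma -/

theorem key_lemma (K : Type*) [Field K] {n : ℕ} (G : SimpleGraph (Fin n))
    (w : Sym2 (Fin n) → ℕ) (f : MvPolynomial (Fin n) K)
    (hf : f ∈ intClosure (edgeIdeal K G w)) (lam : Fin n → ℕ) (V : ℕ)
    (hgen : ∀ i j : Fin n, G.Adj i j → V ≤ w s(i, j) * (lam i + lam j)) :
    ∀ a ∈ f.support, V ≤ wdeg lam a := by
  set I := edgeIdeal K G w with hI
  set ψ := psiHom K lam with hψdef
  have hspan : I ≤ Ideal.comap ψ (lowV V) := by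
    rw [hI, edgeIdeal, Ideal.span_le]
    rintro m ⟨i, j, hadj, rfl⟩
    have hne : i ≠ j := hadj.ne
    have hb : (X i ^ w s(i, j) * X j ^ w s(i, j) : MvPolynomial (Fin n) K)
        = monomial (Finsupp.single i (w s(i, j)) + Finsupp.single j (w s(i, j))) 1 := by
      rw [X_pow_eq_monomial, X_pow_eq_monomial, monomial_mul, one_mul]
    have hwd : V ≤ wdeg lam (Finsupp.single i (w s(i, j)) + Finsupp.single j (w s(i, j))) := by
      have h1 : wdeg lam (Finsupp.single i (w s(i, j)) + Finsupp.single j (w s(i, j)))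
          = lam i * w s(i, j) + lam j * w s(i, j) := by
        rw [wdeg_apply]
        have : ∀ v : Fin n, lam v *
            ((Finsupp.single i (w s(i, j)) + Finsupp.single j (w s(i, j))) v)
            = lam v * (Finsupp.single i (w s(i, j)) v) +
              lam v * (Finsupp.single j (w s(i, j)) v) := by
          intro v
          rw [Finsupp.add_apply, mul_add]
        rw [Finset.sum_congr rfl (fun v _ => this v), Finset.sum_add_distrib]
        congr 1
        · rw [Finset.sum_eq_single i]
          · simp
          · intro v _ hvi
            simp [Finsupp.single_apply, Ne.symm hvi]
          · intro h; exact absurd (Finset.mem_univ i) h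
        · rw [Finset.sum_eq_single j]
          · simp
          · intro v _ hvj
            simp [Finsupp.single_apply, Ne.symm hvj]
          · intro h; exact absurd (Finset.mem_univ j) h
      calc V ≤ w s(i, j) * (lam i + lam j) := hgen i j hadj
        _ = lam i * w s(i, j) + lam j * w s(i, j) := by ring
        _ = wdeg lam (Finsupp.single i (w s(i, j)) + Finsupp.single j (w s(i, j))) := h1.symm
    rw [SetLike.mem_coe, Ideal.mem_comap, hb, psiHom_monomial]
    intro m hm
    rw [Polynomial.coeff_C_mul, Polynomial.coeff_X_pow, if_neg (by omega), mul_zero]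
  have hpow : ∀ i : ℕ, I ^ i ≤ Ideal.comap ψ (lowV (i * V)) := by
    intro i
    induction i with
    | zero =>
      intro x _
      rw [Ideal.mem_comap]
      intro m hm
      omega
    | succ i ih =>
      rw [pow_succ]
      refine Ideal.mul_le.mpr ?_
      intro r hr s hs
      rw [Ideal.mem_comap, map_mul]
      refine lowV_anti (le_of_eq ?_) (mul_mem_lowV (ih hr) (hspan hs))
      ring
  obtain ⟨k, hk, c, hc, heq⟩ := hf
  have hflow : ψ f ∈ lowV V := by
    by_cases hf0 : f = 0
    · rw [hf0, map_zero]
      exact (lowV V).zero_mem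
    have hψ : ψ f ≠ 0 := psiHom_ne_zero K lam hf0
    by_contra hlow
    rw [mem_lowV] at hlow
    push_neg at hlow
    obtain ⟨m, hm, hne⟩ := hlow
    set d := (ψ f).natTrailingDegree with hd
    have hdV : d + 1 ≤ V := by
      have := Polynomial.natTrailingDegree_le_of_ne_zero hne
      omega
    have hfk : f ^ k = -∑ i ∈ Finset.Icc 1 k, c i * f ^ (k - i) :=
      eq_neg_of_add_eq_zero_left heq
    have hmem : ψ (f ^ k) ∈ lowV (k * d + 1) := by
      rw [hfk, map_neg, map_sum]
      refine neg_mem (Ideal.sum_mem _ ?_)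
      intro i hi
      rw [Finset.mem_Icc] at hi
      rw [map_mul]
      have h1 : ψ (c i) ∈ lowV (i * V) := hpow i (hc i (Finset.mem_Icc.mpr hi))
      have h2 : ψ (f ^ (k - i)) ∈ lowV ((k - i) * d) := by
        rw [map_pow, mem_lowV]
        intro m' hm'
        apply Polynomial.coeff_eq_zero_of_lt_natTrailingDegree
        rw [ntd_pow _ hψ, ← hd]
        omega
      refine lowV_anti ?_ (mul_mem_lowV h1 h2)
      obtain ⟨j, rfl⟩ : ∃ j, k = i + j := ⟨k - i, by omega⟩
      have hji : i + j - i = j := by omega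
      rw [hji]
      have h3 : i * (d + 1) ≤ i * V := Nat.mul_le_mul_left _ hdV
      nlinarith [h3, hi.1]
    have hcon : ((ψ f) ^ k).coeff (k * d) = 0 := by
      rw [← map_pow]
      exact hmem (k * d) (by omega)
    have hne2 : ((ψ f) ^ k).coeff (k * d) ≠ 0 := by
      have hntd : ((ψ f) ^ k).natTrailingDegree = k * d := ntd_pow _ hψ k
      rw [← hntd]
      exact Polynomial.coeff_natTrailingDegree_ne_zero.mpr (pow_ne_zero _ hψ)
    exact hne2 hcon
  intro a ha
  by_contra hV
  have h0 := hflow (wdeg lam a) (by omega)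
  have h1 := psiHom_coeff K lam f a
  rw [h0, MvPolynomial.coeff_zero] at h1
  exact (MvPolynomial.mem_support_iff.mp ha) h1.symm

end EWAux

open EWAux in
/-- If an edge-weighted graph has at most one edge of non-trivial weight (weight ≥ 2),
then its edge ideal is integrally closed. -/
theorem edgeIdeal_isIntClosed_of_at_most_one_nontrivial_edge
    (K : Type*) [Field K] {n : ℕ} (G : SimpleGraph (Fin n))
    (w : Sym2 (Fin n) → ℕ) (hw : ∀ e ∈ G.edgeSet, 1 ≤ w e)
    (hone : ∀ e₁ ∈ G.edgeSet, ∀ e₂ ∈ G.edgeSet, 2 ≤ w e₁ → 2 ≤ w e₂ → e₁ = e₂) :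
    IsIntClosed (edgeIdeal K G w) := by
  apply Set.Subset.antisymm
  · -- hard direction
    intro f hf
    have key := fun (lam : Fin n → ℕ) (V : ℕ) h => key_lemma K G w f hf lam V h
    by_cases hE : ∃ i j : Fin n, G.Adj i j
    · rw [SetLike.mem_coe]
      have hsum : ∑ a ∈ f.support, monomial a (MvPolynomial.coeff a f) ∈ edgeIdeal K G w := by
        refine Ideal.sum_mem _ ?_
        intro a ha
        suffices hdom : ∃ i j : Fin n, G.Adj i j ∧ w s(i, j) ≤ a i ∧ w s(i, j) ≤ a j by
          obtain ⟨i, j, hadj, hi, hj⟩ := hdom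
          have hne : i ≠ j := hadj.ne
          set b := Finsupp.single i (w s(i, j)) + Finsupp.single j (w s(i, j)) with hbdef
          have hble : b ≤ a := by
            rw [Finsupp.le_def]
            intro v
            rw [hbdef, Finsupp.add_apply, Finsupp.single_apply, Finsupp.single_apply]
            rcases eq_or_ne i v with rfl | hvi
            · rw [if_pos rfl, if_neg (by exact fun h => hne h.symm)]
              omega
            · rw [if_neg hvi]
              rcases eq_or_ne j v with rfl | hvj
              · rw [if_pos rfl]
                omega
              · rw [if_neg hvj]
                omega
          have hxy : (X i ^ w s(i, j) * X j ^ w s(i, j) : MvPolynomial (Fin n) K)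
              = monomial b 1 := by
            rw [X_pow_eq_monomial, X_pow_eq_monomial, monomial_mul, one_mul]
          have hmono : (monomial a (MvPolynomial.coeff a f) : MvPolynomial (Fin n) K)
              = monomial (a - b) (MvPolynomial.coeff a f) * monomial b 1 := by
            rw [monomial_mul, mul_one, tsub_add_cancel_of_le hble]
          rw [hmono, ← hxy]
          exact Ideal.mul_mem_left _ _ (Ideal.subset_span ⟨i, j, hadj, rfl⟩)
        by_contra hnot
        push_neg at hnot
        by_cases hz : ∀ i j : Fin n, G.Adj i j → a i = 0 ∨ a j = 0
        · -- every edge has an endpoint outside the support of a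
          have hcond : ∀ i j : Fin n, G.Adj i j →
              1 ≤ w s(i, j) * ((fun v => if a v = 0 then 1 else 0) i
                + (fun v => if a v = 0 then 1 else 0) j) := by
            intro i j hadj
            have hw1 : 1 ≤ w s(i, j) := hw _ ((G.mem_edgeSet).mpr hadj)
            have hl : 1 ≤ (if a i = 0 then 1 else 0) + (if a j = 0 then 1 else 0) := by
              rcases hz i j hadj with h | h <;> simp [h]
            calc 1 = 1 * 1 := (one_mul 1).symm
              _ ≤ w s(i, j) * ((if a i = 0 then 1 else 0) + (if a j = 0 then 1 else 0)) :=
                Nat.mul_le_mul hw1 hl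
          have hKey := key (fun v => if a v = 0 then 1 else 0) 1 hcond a ha
          have hzero : wdeg (fun v => if a v = 0 then 1 else 0) a = 0 := by
            rw [wdeg_apply]
            refine Finset.sum_eq_zero ?_
            intro v _
            by_cases h : a v = 0 <;> simp [h]
          omega
        · push_neg at hz
          obtain ⟨p, q, hpq, hp0, hq0⟩ := hz
          have main : ∀ p q : Fin n, G.Adj p q → a p ≠ 0 → a q ≠ 0 → a p ≤ a q → False := by
            intro p q hpq hp0 hq0 hle
            have hlt : a p < w s(p, q) := by
              rcases lt_or_ge (a p) (w s(p, q)) with h | h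
              · exact h
              · have := hnot p q hpq h
                omega
            set lam : Fin n → ℕ := fun v => if v = p then 1 else if a v = 0 then a p + 1 else 0
              with hlam
            have hlamp : lam p = 1 := by simp [hlam]
            have hlamq : lam q = 0 := by
              have hqp : q ≠ p := hpq.ne'
              simp [hlam, hqp, hq0]
            have hcond : ∀ i j : Fin n, G.Adj i j →
                a p + 1 ≤ w s(i, j) * (lam i + lam j) := by
              intro i j hadj
              by_cases he : s(i, j) = s(p, q)
              · have hij : (i = p ∧ j = q) ∨ (i = q ∧ j = p) := Sym2.eq_iff.mp he
                rw [he]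
                rcases hij with ⟨rfl, rfl⟩ | ⟨rfl, rfl⟩
                · rw [hlamp, hlamq]
                  omega
                · rw [hlamp, hlamq]
                  omega
              · have hwe : w s(i, j) = 1 := by
                  have h1 : 1 ≤ w s(i, j) := hw _ ((G.mem_edgeSet).mpr hadj)
                  by_contra h2
                  have h3 : 2 ≤ w s(i, j) := by omega
                  have h4 : 2 ≤ w s(p, q) := by omega
                  exact he (hone _ ((G.mem_edgeSet).mpr hadj) _
                    ((G.mem_edgeSet).mpr hpq) h3 h4)
                have hz' : a i = 0 ∨ a j = 0 := by
                  by_contra h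
                  push_neg at h
                  have := hnot i j hadj (by omega)
                  omega
                rcases hz' with h | h
                · have hip : i ≠ p := fun hip => hp0 (hip ▸ h)
                  have : lam i = a p + 1 := by simp [hlam, hip, h]
                  rw [hwe, one_mul]
                  omega
                · have hjp : j ≠ p := fun hjp => hp0 (hjp ▸ h)
                  have : lam j = a p + 1 := by simp [hlam, hjp, h]
                  rw [hwe, one_mul]
                  omega
            have hKey := key lam (a p + 1) hcond a ha
            have hwd : wdeg lam a = a p := by
              rw [wdeg_apply, Finset.sum_eq_single p]
              · rw [hlamp, one_mul]
              · intro v _ hvp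
                by_cases h : a v = 0 <;> simp [hlam, hvp, h]
              · intro h
                exact absurd (Finset.mem_univ p) h
            omega
          rcases le_total (a p) (a q) with h | h
          · exact main p q hpq hp0 hq0 h
          · exact main q p hpq.symm hq0 hp0 h
      rwa [support_sum_monomial_coeff] at hsum
    · -- no edges: f must be 0
      push_neg at hE
      have hf0 : f = 0 := by
        by_contra h
        have hsupp : f.support.Nonempty := by
          rwa [Finset.nonempty_iff_ne_empty, Ne, MvPolynomial.support_eq_empty]
        obtain ⟨a, ha⟩ := hsupp
        have := key (fun _ => 1) (wdeg (fun _ => 1) a + 1)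
          (fun i j hij => absurd hij (hE i j)) a ha
        omega
      rw [hf0]
      exact (edgeIdeal K G w).zero_mem
  · -- easy direction: I ⊆ intClosure I
    intro f hf
    rw [SetLike.mem_coe] at hf
    refine ⟨1, one_pos, fun _ => -f, ?_, ?_⟩
    · intro i hi
      rw [Finset.mem_Icc] at hi
      have : i = 1 := by omega
      subst this
      rw [pow_one]
      exact neg_mem hf
    · rw [Finset.Icc_self, Finset.sum_singleton]
      ring
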